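/- Hodge decomposition for Hilbert complexes: with d_{q-1}, d_q bounded operators between Hilbert spaces satisfying d_q ∘ d_{q-1} = 0 and Δ_q = d_{q-1}d_{q-1}* + d_q*d_q, there is an orthogonal decomposition C^q = ker Δ_q ⊕ closure(im d_{q-1}) ⊕ closure(im d_q*). -/

import Mathlib

set_option maxHeartbeats 1000000


/-- Lemma 6.7 b), Hodge decomposition: with `d₁ ∘ d₀ = 0` and
`Δ = d₀ d₀* + d₁* d₁`, the space `C^q` decomposes orthogonally as
`ker Δ ⊕ closure(im d₀) ⊕ closure(im d₁*)`. -/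
theorem hodge_decomposition
    {H0 H1 H2 : Type*}
    [NormedAddCommGroup H0] [InnerProductSpace ℝ H0] [CompleteSpace H0]
    [NormedAddCommGroup H1] [InnerProductSpace ℝ H1] [CompleteSpace H1]
    [NormedAddCommGroup H2] [InnerProductSpace ℝ H2] [CompleteSpace H2]
    (d0 : H0 →L[ℝ] H1) (d1 : H1 →L[ℝ] H2) (hdd : d1.comp d0 = 0) :
    let Δ := d0.comp (ContinuousLinearMap.adjoint d0)
      + (ContinuousLinearMap.adjoint d1).comp d1
    let K := LinearMap.ker (Δ : H1 →ₗ[ℝ] H1)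
    let A := (LinearMap.range (d0 : H0 →ₗ[ℝ] H1)).topologicalClosure
    let B := (LinearMap.range (ContinuousLinearMap.adjoint d1 : H2 →ₗ[ℝ] H1)).topologicalClosure
    (∀ x ∈ K, ∀ y ∈ A, (inner ℝ x y : ℝ) = 0) ∧
    (∀ x ∈ K, ∀ y ∈ B, (inner ℝ x y : ℝ) = 0) ∧
    (∀ x ∈ A, ∀ y ∈ B, (inner ℝ x y : ℝ) = 0) ∧
    K ⊔ A ⊔ B = ⊤ := by
  intro Δ K A B
  have hAle : A ≤ LinearMap.ker (d1 : H1 →ₗ[ℝ] H2) := by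
    apply Submodule.topologicalClosure_minimal
    · rintro _ ⟨z, rfl⟩
      have : d1.comp d0 z = 0 := by rw [hdd]; rfl
      simpa using this
    · exact ContinuousLinearMap.isClosed_ker d1
  -- membership in K
  have key : ∀ x : H1, x ∈ K ↔ ContinuousLinearMap.adjoint d0 x = 0 ∧ d1 x = 0 := by
    intro x
    constructor
    · intro hx
      have hx' : Δ x = 0 := hx
      have hexp : (inner ℝ (Δ x) x : ℝ)
          = ‖ContinuousLinearMap.adjoint d0 x‖ ^ 2 + ‖d1 x‖ ^ 2 := by
        simp only [Δ, ContinuousLinearMap.add_apply, ContinuousLinearMap.comp_apply,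
          inner_add_left]
        rw [ContinuousLinearMap.adjoint_inner_left,
          ← ContinuousLinearMap.adjoint_inner_right d0 (ContinuousLinearMap.adjoint d0 x) x,
          real_inner_self_eq_norm_sq, real_inner_self_eq_norm_sq]
      rw [hx'] at hexp
      simp only [inner_zero_left] at hexp
      constructor
      · have : ‖ContinuousLinearMap.adjoint d0 x‖ = 0 := by
          nlinarith [norm_nonneg (ContinuousLinearMap.adjoint d0 x), norm_nonneg (d1 x),
            sq_nonneg ‖ContinuousLinearMap.adjoint d0 x‖, sq_nonneg ‖d1 x‖]
        exact norm_eq_zero.mp this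
      · have : ‖d1 x‖ = 0 := by
          nlinarith [norm_nonneg (ContinuousLinearMap.adjoint d0 x), norm_nonneg (d1 x),
            sq_nonneg ‖ContinuousLinearMap.adjoint d0 x‖, sq_nonneg ‖d1 x‖]
        exact norm_eq_zero.mp this
    · rintro ⟨h0, h1⟩
      show Δ x = 0
      simp [Δ, ContinuousLinearMap.add_apply, ContinuousLinearMap.comp_apply, h0, h1]
  -- orthogonal complements
  have hAorth : ∀ x : H1, x ∈ Aᗮ ↔ ContinuousLinearMap.adjoint d0 x = 0 := by
    intro x
    constructor
    · intro hx
      have hmem : d0 (ContinuousLinearMap.adjoint d0 x) ∈ A :=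
        (LinearMap.range (d0 : H0 →ₗ[ℝ] H1)).le_topologicalClosure ⟨ContinuousLinearMap.adjoint d0 x, rfl⟩
      have h := (Submodule.mem_orthogonal A x).mp hx _ hmem
      rw [← ContinuousLinearMap.adjoint_inner_right d0 (ContinuousLinearMap.adjoint d0 x) x] at h
      exact inner_self_eq_zero.mp h
    · intro hx
      show x ∈ ((LinearMap.range (d0 : H0 →ₗ[ℝ] H1)).topologicalClosure)ᗮ
      rw [← Submodule.orthogonal_orthogonal_eq_closure, Submodule.triorthogonal_eq_orthogonal]
      rw [Submodule.mem_orthogonal]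
      rintro _ ⟨z, rfl⟩
      rw [ContinuousLinearMap.coe_coe, ← ContinuousLinearMap.adjoint_inner_right d0 z x, hx, inner_zero_right]
  have hBorth : ∀ x : H1, x ∈ Bᗮ ↔ d1 x = 0 := by
    intro x
    constructor
    · intro hx
      have hmem : ContinuousLinearMap.adjoint d1 (d1 x) ∈ B :=
        (LinearMap.range (ContinuousLinearMap.adjoint d1 : H2 →ₗ[ℝ] H1)).le_topologicalClosure
          ⟨d1 x, rfl⟩
      have h := (Submodule.mem_orthogonal B x).mp hx _ hmem
      rw [ContinuousLinearMap.adjoint_inner_left] at h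
      exact inner_self_eq_zero.mp h
    · intro hx
      show x ∈ ((LinearMap.range (ContinuousLinearMap.adjoint d1 : H2 →ₗ[ℝ] H1)).topologicalClosure)ᗮ
      rw [← Submodule.orthogonal_orthogonal_eq_closure, Submodule.triorthogonal_eq_orthogonal]
      rw [Submodule.mem_orthogonal]
      rintro _ ⟨z, rfl⟩
      rw [ContinuousLinearMap.coe_coe, ContinuousLinearMap.adjoint_inner_left, hx, inner_zero_right]
  -- the three orthogonality statements
  have hKA : ∀ x ∈ K, ∀ y ∈ A, (inner ℝ x y : ℝ) = 0 := by
    intro x hx y hy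
    have : x ∈ Aᗮ := (hAorth x).mpr ((key x).mp hx).1
    rw [real_inner_comm]
    exact (Submodule.mem_orthogonal A x).mp this y hy
  have hKB : ∀ x ∈ K, ∀ y ∈ B, (inner ℝ x y : ℝ) = 0 := by
    intro x hx y hy
    have : x ∈ Bᗮ := (hBorth x).mpr ((key x).mp hx).2
    rw [real_inner_comm]
    exact (Submodule.mem_orthogonal B x).mp this y hy
  have hAB : ∀ x ∈ A, ∀ y ∈ B, (inner ℝ x y : ℝ) = 0 := by
    intro x hx y hy
    have : x ∈ Bᗮ := (hBorth x).mpr (hAle hx)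
    rw [real_inner_comm]
    exact (Submodule.mem_orthogonal B x).mp this y hy
  refine ⟨hKA, hKB, hAB, ?_⟩
  -- completeness instances
  haveI : CompleteSpace K := by
    exact (ContinuousLinearMap.isClosed_ker Δ).completeSpace_coe
  haveI : CompleteSpace A := (LinearMap.range (d0 : H0 →ₗ[ℝ] H1)).isClosed_topologicalClosure.completeSpace_coe
  haveI : CompleteSpace B :=
    (LinearMap.range (ContinuousLinearMap.adjoint d1 : H2 →ₗ[ℝ] H1)).isClosed_topologicalClosure.completeSpace_coe
  -- B = (ker d1)ᗮ
  have hBeq : B = (LinearMap.ker (d1 : H1 →ₗ[ℝ] H2) : Submodule ℝ H1)ᗮ := by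
    have h1 : Bᗮ = (LinearMap.ker (d1 : H1 →ₗ[ℝ] H2) : Submodule ℝ H1) := by
      ext x; exact hBorth x
    have h2 : Bᗮᗮ = B := by
      rw [Submodule.orthogonal_orthogonal_eq_closure]
      exact (LinearMap.range (ContinuousLinearMap.adjoint d1 : H2 →ₗ[ℝ] H1)).isClosed_topologicalClosure.submodule_topologicalClosure_eq
    rw [← h2, h1]
  have hKorth_le : Kᗮ ≤ A ⊔ B := by
    intro x hx
    set a : H1 := (A.orthogonalProjection x : H1) with ha
    have har : x - a ∈ Aᗮ := Submodule.sub_starProjection_mem_orthogonal x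
    have hrB : x - a ∈ B := by
      rw [hBeq, Submodule.mem_orthogonal]
      intro z hz
      set a' : H1 := (A.orthogonalProjection z : H1) with ha'
      have hw : z - a' ∈ Aᗮ := Submodule.sub_starProjection_mem_orthogonal z
      have ha'A : a' ∈ A := (A.orthogonalProjection z).2
      have hwK : z - a' ∈ K := by
        rw [key]
        refine ⟨(hAorth _).mp hw, ?_⟩
        have hz1 : d1 z = 0 := hz
        have hz2 : d1 a' = 0 := hAle ha'A
        simp [map_sub, hz1, hz2]
      have hsplit : z = a' + (z - a') := by abel
      rw [hsplit, inner_add_left]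
      have h1 : (inner ℝ a' (x - a) : ℝ) = 0 :=
        (Submodule.mem_orthogonal A (x - a)).mp har a' ha'A
      have h2 : (inner ℝ (z - a') (x - a) : ℝ) = 0 := by
        rw [inner_sub_right]
        have hxK : (inner ℝ (z - a') x : ℝ) = 0 :=
          (Submodule.mem_orthogonal K x).mp hx _ hwK
        rw [hxK, hKA _ hwK a (A.orthogonalProjection x).2, sub_zero]
      rw [h1, h2, add_zero]
    have hxx : x = a + (x - a) := by abel
    rw [hxx]
    exact Submodule.add_mem_sup (A.orthogonalProjection x).2 hrB
  have htop : K ⊔ Kᗮ = ⊤ := Submodule.sup_orthogonal_of_hasOrthogonalProjection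
  rw [eq_top_iff, ← htop]
  apply sup_le
  · exact le_trans le_sup_left le_sup_left
  · exact le_trans hKorth_le (sup_le (le_trans le_sup_right le_sup_left) le_sup_right)
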